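/- Fix integers K ≥ m ≥ 1, ε > 0, c : T_{K,m} → [0,1/K], and x ∈ [0,1]^K. Suppose during the run of the partition algorithm on x the assignment P ← P̂ occurs, and suppose that for every ancestor Q ⪯ P and every child Q_j of Q in T_{K,m}, the inequality |gap_{Q_j}(x) − c(Q)·range_Q(x)| ≤ 10Kε does NOT hold. Then for every y ∈ [0,1]^K with ‖x − y‖_{ℓ∞} ≤ ε, the assignment P ← P̂ also occurs when the algorithm is run on y (with the same parameters c and ε). -/

import Mathlib

open Classical

noncomputable section

namespace MPB

variable (K m : ℕ)

/-- Max of `x` over a finite set of coordinates. -/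
def fmax (x : Fin K → ℝ) (S : Finset (Fin K)) : ℝ := sSup (x '' ↑S)

/-- Min of `x` over a finite set of coordinates. -/
def fmin (x : Fin K → ℝ) (S : Finset (Fin K)) : ℝ := sInf (x '' ↑S)

/-- range_B(x) = max_{k∈B} x(k) - min_{k∈B} x(k). -/
def rangeX (x : Fin K → ℝ) (B : Finset (Fin K)) : ℝ := fmax K x B - fmin K x B

/-- gap of the child obtained by splitting `B` into `T > B \ T`:
gap = min_{k∈T} x(k) - max_{ℓ∈B\T} x(ℓ). -/
def gapX (x : Fin K → ℝ) (T B : Finset (Fin K)) : ℝ := fmin K x T - fmax K x (B \ T)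

/-- i(P): the largest `i` such that the first `i` parts of the ordered partition `L`
have total size at most `m`. -/
def iIdx (L : List (Finset (Fin K))) : ℕ :=
  Nat.findGreatest (fun i => ((L.take i).map Finset.card).sum ≤ m) L.length

/-- A(P): the union of the first i(P) parts (the coordinates already identified as
belonging to the top m). -/
def Aset (L : List (Finset (Fin K))) : Finset (Fin K) :=
  (L.take (iIdx K m L)).foldr (· ∪ ·) ∅

/-- B(P): the currently undecided part; `∅` if `|A(P)| = m`, else the part S_{i(P)+1}. -/
def Bset (L : List (Finset (Fin K))) : Finset (Fin K) :=
  if (Aset K m L).card = m then ∅ else L.getD (iIdx K m L) ∅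

/-- A vertex of the tree T_{K,m} is encoded by the sequence of splits leading to it from
the root (head = most recently chosen top part): this recovers its underlying ordered
partition, by splitting at each step the then-current undecided set B into `T > B \ T`. -/
def partitionOf : List (Finset (Fin K)) → List (Finset (Fin K))
  | [] => [Finset.univ]
  | T :: l =>
    let L := partitionOf l
    let i := iIdx K m L
    L.take i ++ [T, L.getD i ∅ \ T] ++ L.drop (i + 1)

/-- A(P) for a vertex of T_{K,m}. -/
def Anode (l : List (Finset (Fin K))) : Finset (Fin K) := Aset K m (partitionOf K m l)

/-- B(P) for a vertex of T_{K,m}. -/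
def Bnode (l : List (Finset (Fin K))) : Finset (Fin K) := Bset K m (partitionOf K m l)

/-- Membership in T_{K,m}: each successive split must cut the current undecided set B
into a nonempty strict subset (the new top part) and the rest. The root is `[]`, a
vertex is a leaf iff its `Bnode` is empty, `T :: l` is a child of `l`, and the ancestors
of a vertex are exactly its list suffixes. -/
def Valid : List (Finset (Fin K)) → Prop
  | [] => True
  | T :: l => Valid l ∧ T.Nonempty ∧ T ⊂ Bnode K m l

/-- The elements of `B` sorted by `x` in (weakly) decreasing order,
ties broken by coordinate index (stability of merge sort). -/
def sortedB (x : Fin K → ℝ) (B : Finset (Fin K)) : List (Fin K) :=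
  (B.sort (· ≤ ·)).mergeSort (fun a b => decide (x b ≤ x a))

/-- The set `{a_1, …, a_j}` of the `j` largest coordinates of `B` under `x`. -/
def topSet (x : Fin K → ℝ) (B : Finset (Fin K)) (j : ℕ) : Finset (Fin K) :=
  ((sortedB K x B).take j).toFinset

/-- Line 7 of Algorithm 1: the algorithm, currently at the vertex `l`, returns `l`
because for some ancestor `q ⪯ l` and some child `q_j` of `q` (splitting B(q) at the
`j`-th position of the `x`-sorted order), the quantity `gap_{q_j}(x) - c(q)·range_q(x)`
is within `(d(l,q)+1)·6ε` of zero. -/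
def stopAt (c : List (Finset (Fin K)) → ℝ) (ε : ℝ) (x : Fin K → ℝ)
    (l : List (Finset (Fin K))) : Prop :=
  ∃ q ∈ l.tails, ∃ j, 1 ≤ j ∧ j < (Bnode K m q).card ∧
    |gapX K x (topSet K x (Bnode K m q) j) (Bnode K m q) - c q * rangeX K x (Bnode K m q)|
      ≤ ((l.length - q.length + 1 : ℕ) : ℝ) * (6 * ε)

/-- Lines 10-15 of Algorithm 1: move from `l` to the child `l_j` for the smallest
`j ∈ {1, …, ℓ-1}` with `gap_{l_j}(x) ≥ c(l)·range_l(x)`. -/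
def descend (c : List (Finset (Fin K)) → ℝ) (x : Fin K → ℝ)
    (l : List (Finset (Fin K))) : List (Finset (Fin K)) :=
  if h : ∃ j, 1 ≤ j ∧ j < (Bnode K m l).card ∧
      c l * rangeX K x (Bnode K m l)
        ≤ gapX K x (topSet K x (Bnode K m l) j) (Bnode K m l)
  then topSet K x (Bnode K m l) (Nat.find h) :: l
  else l

/-- The while loop of Algorithm 1, with fuel (the tree T_{K,m} has depth < K, so fuel K
suffices for the loop to terminate as in the paper). -/
def run (c : List (Finset (Fin K)) → ℝ) (ε : ℝ) (x : Fin K → ℝ) :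
    ℕ → List (Finset (Fin K)) → List (Finset (Fin K))
  | 0, l => l
  | n + 1, l =>
    if Bnode K m l = ∅ then l
    else if stopAt K m c ε x l then l
    else run c ε x n (descend K m c x l)

/-- The vertex P_{c,ε}(x) ∈ T_{K,m} output by Algorithm 1 on input x. The vertices
visited by the while loop are exactly the suffixes of the output. -/
def Pmap (c : List (Finset (Fin K)) → ℝ) (ε : ℝ) (x : Fin K → ℝ) :
    List (Finset (Fin K)) :=
  run K m c ε x K []


section Aux

lemma le_fmax {x : Fin K → ℝ} {S : Finset (Fin K)} {a : Fin K} (ha : a ∈ S) :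
    x a ≤ fmax K x S :=
  le_csSup (Set.Finite.bddAbove ((S.finite_toSet).image x)) ⟨a, ha, rfl⟩

lemma fmin_le {x : Fin K → ℝ} {S : Finset (Fin K)} {a : Fin K} (ha : a ∈ S) :
    fmin K x S ≤ x a :=
  csInf_le (Set.Finite.bddBelow ((S.finite_toSet).image x)) ⟨a, ha, rfl⟩

lemma fmax_mem {x : Fin K → ℝ} {S : Finset (Fin K)} (h : S.Nonempty) :
    ∃ a ∈ S, fmax K x S = x a := by
  have hne : ((x '' ↑S) : Set ℝ).Nonempty :=
    (Finset.coe_nonempty.mpr h).image x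
  obtain ⟨a, ha, hx⟩ := Set.Nonempty.csSup_mem hne ((S.finite_toSet).image x)
  exact ⟨a, ha, hx.symm⟩

lemma fmin_mem {x : Fin K → ℝ} {S : Finset (Fin K)} (h : S.Nonempty) :
    ∃ a ∈ S, fmin K x S = x a := by
  have hne : ((x '' ↑S) : Set ℝ).Nonempty :=
    (Finset.coe_nonempty.mpr h).image x
  obtain ⟨a, ha, hx⟩ := Set.Nonempty.csInf_mem hne ((S.finite_toSet).image x)
  exact ⟨a, ha, hx.symm⟩

lemma rangeX_nonneg {x : Fin K → ℝ} {S : Finset (Fin K)} (h : S.Nonempty) :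
    0 ≤ rangeX K x S := by
  obtain ⟨a, ha⟩ := h
  have h1 := le_fmax K (x := x) ha
  have h2 := fmin_le K (x := x) ha
  unfold rangeX; linarith

lemma fmax_lip {x y : Fin K → ℝ} {ε : ℝ} (hxy : ∀ i, |x i - y i| ≤ ε)
    {S : Finset (Fin K)} (hS : S.Nonempty) : fmax K y S ≤ fmax K x S + ε := by
  obtain ⟨a, ha, heq⟩ := fmax_mem K (x := y) hS
  rw [heq]
  have h1 := (abs_sub_le_iff.mp (hxy a)).2
  have h2 := le_fmax K (x := x) ha
  linarith

lemma fmin_lip {x y : Fin K → ℝ} {ε : ℝ} (hxy : ∀ i, |x i - y i| ≤ ε)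
    {S : Finset (Fin K)} (hS : S.Nonempty) : fmin K x S - ε ≤ fmin K y S := by
  obtain ⟨a, ha, heq⟩ := fmin_mem K (x := y) hS
  rw [heq]
  have h1 := (abs_sub_le_iff.mp (hxy a)).1
  have h2 := fmin_le K (x := x) ha
  linarith

lemma sortedB_perm (x : Fin K → ℝ) (B : Finset (Fin K)) :
    List.Perm (sortedB K x B) (B.sort (· ≤ ·)) := List.mergeSort_perm _ _

lemma mem_sortedB {x : Fin K → ℝ} {B : Finset (Fin K)} {a : Fin K} :
    a ∈ sortedB K x B ↔ a ∈ B := by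
  rw [(sortedB_perm K x B).mem_iff, Finset.mem_sort]

lemma sortedB_nodup (x : Fin K → ℝ) (B : Finset (Fin K)) : (sortedB K x B).Nodup :=
  ((sortedB_perm K x B).nodup_iff).mpr (B.sort_nodup _)

lemma sortedB_length (x : Fin K → ℝ) (B : Finset (Fin K)) :
    (sortedB K x B).length = B.card := by
  rw [(sortedB_perm K x B).length_eq, Finset.length_sort]

lemma sortedB_pairwise (x : Fin K → ℝ) (B : Finset (Fin K)) :
    (sortedB K x B).Pairwise (fun a b => x b ≤ x a) := by
  have h := List.pairwise_mergeSort (le := fun a b => decide (x b ≤ x a))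
    (fun a b c hab hbc => by
      simp only [decide_eq_true_eq] at *
      exact le_trans hbc hab)
    (fun a b => by
      simp only [Bool.or_eq_true, decide_eq_true_eq]
      exact le_total (x b) (x a))
    (B.sort (· ≤ ·))
  exact h.imp (fun hab => of_decide_eq_true hab)

lemma topSet_subset (x : Fin K → ℝ) (B : Finset (Fin K)) (j : ℕ) :
    topSet K x B j ⊆ B := by
  intro a ha
  rw [topSet, List.mem_toFinset] at ha
  exact (mem_sortedB K).mp (List.mem_of_mem_take ha)

lemma topSet_card {x : Fin K → ℝ} {B : Finset (Fin K)} {j : ℕ} (hj : j ≤ B.card) :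
    (topSet K x B j).card = j := by
  rw [topSet, List.toFinset_card_of_nodup
    ((List.take_sublist j _).nodup (sortedB_nodup K x B))]
  rw [List.length_take, sortedB_length]
  omega

lemma topSet_nonempty {x : Fin K → ℝ} {B : Finset (Fin K)} {j : ℕ}
    (hj1 : 1 ≤ j) (hj2 : j ≤ B.card) : (topSet K x B j).Nonempty := by
  rw [← Finset.card_pos, topSet_card K hj2]; omega

lemma topSet_ssubset {x : Fin K → ℝ} {B : Finset (Fin K)} {j : ℕ}
    (hj2 : j < B.card) : topSet K x B j ⊂ B := by
  refine Finset.ssubset_iff_subset_ne.mpr ⟨topSet_subset K x B j, fun h => ?_⟩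
  have hcard := topSet_card K (x := x) (B := B) (j := j) hj2.le
  rw [h] at hcard
  omega

lemma sdiff_topSet (x : Fin K → ℝ) (B : Finset (Fin K)) (j : ℕ) :
    B \ topSet K x B j = ((sortedB K x B).drop j).toFinset := by
  ext b
  simp only [Finset.mem_sdiff, topSet, List.mem_toFinset]
  constructor
  · rintro ⟨hb, hnt⟩
    have hmem : b ∈ sortedB K x B := (mem_sortedB K).mpr hb
    rw [← List.take_append_drop j (sortedB K x B), List.mem_append] at hmem
    rcases hmem with h | h
    · exact absurd h hnt
    · exact h
  · intro h
    refine ⟨(mem_sortedB K).mp (List.mem_of_mem_drop h), fun hc => ?_⟩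
    have hnd := sortedB_nodup K x B
    rw [← List.take_append_drop j (sortedB K x B), List.nodup_append] at hnd
    exact hnd.2.2 b hc b h rfl

lemma sdiff_topSet_nonempty {x : Fin K → ℝ} {B : Finset (Fin K)} {j : ℕ}
    (hj2 : j < B.card) : (B \ topSet K x B j).Nonempty := by
  rw [← Finset.card_pos, Finset.card_sdiff_of_subset (topSet_subset K x B j), topSet_card K hj2.le]
  omega

lemma topSet_dom {x : Fin K → ℝ} {B : Finset (Fin K)} {j : ℕ} {a b : Fin K}
    (ha : a ∈ topSet K x B j) (hb : b ∈ B \ topSet K x B j) : x b ≤ x a := by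
  rw [sdiff_topSet, List.mem_toFinset] at hb
  rw [topSet, List.mem_toFinset] at ha
  have hp := sortedB_pairwise K x B
  rw [← List.take_append_drop j (sortedB K x B), List.pairwise_append] at hp
  exact hp.2.2 a ha b hb

lemma fmin_le_fmin_topSet {x : Fin K → ℝ} {B : Finset (Fin K)} {j : ℕ}
    (S : Finset (Fin K)) (hS : S ⊆ B) (hcard : S.card = j)
    (hj1 : 1 ≤ j) (hj2 : j ≤ B.card) :
    fmin K x S ≤ fmin K x (topSet K x B j) := by
  have hT : (topSet K x B j).card = j := topSet_card K hj2
  by_cases hST : S = topSet K x B j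
  · rw [hST]
  · have hns : ¬ S ⊆ topSet K x B j := fun h =>
      hST (Finset.eq_of_subset_of_card_le h (by rw [hT, hcard]))
    obtain ⟨s, hsS, hsT⟩ := Finset.not_subset.mp hns
    obtain ⟨a0, ha0, heq⟩ := fmin_mem K (x := x) (topSet_nonempty K hj1 hj2)
    rw [heq]
    calc fmin K x S ≤ x s := fmin_le K hsS
      _ ≤ x a0 := topSet_dom K ha0 (Finset.mem_sdiff.mpr ⟨hS hsS, hsT⟩)

lemma fmax_sdiff_topSet_le {x : Fin K → ℝ} {B : Finset (Fin K)} {j : ℕ}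
    (S : Finset (Fin K)) (hS : S ⊆ B) (hcard : S.card = j) (hj2 : j < B.card) :
    fmax K x (B \ topSet K x B j) ≤ fmax K x (B \ S) := by
  have hTc : (topSet K x B j).card = j := topSet_card K hj2.le
  have hTB : topSet K x B j ⊆ B := topSet_subset K x B j
  obtain ⟨b0, hb0, heq⟩ := fmax_mem K (x := x) (sdiff_topSet_nonempty K hj2)
  rw [heq]
  by_cases hb0S : b0 ∈ B \ S
  · exact le_fmax K hb0S
  · by_contra hcon
    push_neg at hcon
    have hsub : B \ S ⊆ B \ topSet K x B j := by
      intro e he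
      have hxe : x e < x b0 := lt_of_le_of_lt (le_fmax K he) hcon
      refine Finset.mem_sdiff.mpr ⟨(Finset.mem_sdiff.mp he).1, fun heT => ?_⟩
      exact absurd (topSet_dom K heT hb0) (not_le.mpr hxe)
    have heqset : B \ S = B \ topSet K x B j :=
      Finset.eq_of_subset_of_card_le hsub
        (by rw [Finset.card_sdiff_of_subset hS, Finset.card_sdiff_of_subset hTB, hTc, hcard])
    rw [heqset] at hb0S
    exact hb0S hb0

lemma topSet_eq_of_sep {y : Fin K → ℝ} {B T : Finset (Fin K)} {j : ℕ}
    (hT : T ⊆ B) (hcard : T.card = j) (hj : j ≤ B.card)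
    (hsep : ∀ a ∈ T, ∀ b ∈ B \ T, y b < y a) :
    topSet K y B j = T := by
  have hT'c : (topSet K y B j).card = j := topSet_card K hj
  by_contra hne
  have h1 : ¬ T ⊆ topSet K y B j := fun h =>
    hne (Finset.eq_of_subset_of_card_le h (by rw [hT'c, hcard])).symm
  have h2 : ¬ topSet K y B j ⊆ T := fun h =>
    hne (Finset.eq_of_subset_of_card_le h (by rw [hT'c, hcard]))
  obtain ⟨a, haT, haT'⟩ := Finset.not_subset.mp h1
  obtain ⟨a', ha'T', ha'T⟩ := Finset.not_subset.mp h2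
  have h3 : y a' < y a :=
    hsep a haT a' (Finset.mem_sdiff.mpr ⟨topSet_subset K y B j ha'T', ha'T⟩)
  have h4 : y a ≤ y a' := topSet_dom K ha'T' (Finset.mem_sdiff.mpr ⟨hT haT, haT'⟩)
  linarith

lemma gap_lip {x y : Fin K → ℝ} {ε : ℝ} (hxy : ∀ i, |x i - y i| ≤ ε)
    {B : Finset (Fin K)} {j : ℕ} (hj1 : 1 ≤ j) (hj2 : j < B.card) :
    gapX K x (topSet K x B j) B - 2 * ε ≤ gapX K y (topSet K y B j) B := by
  have hTxB : topSet K x B j ⊆ B := topSet_subset K x B j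
  have hTxc : (topSet K x B j).card = j := topSet_card K hj2.le
  have h1 : fmin K x (topSet K x B j) - ε ≤ fmin K y (topSet K x B j) :=
    fmin_lip K hxy (topSet_nonempty K hj1 hj2.le)
  have h2 : fmin K y (topSet K x B j) ≤ fmin K y (topSet K y B j) :=
    fmin_le_fmin_topSet K (topSet K x B j) hTxB hTxc hj1 hj2.le
  have h3 : fmax K y (B \ topSet K y B j) ≤ fmax K y (B \ topSet K x B j) :=
    fmax_sdiff_topSet_le K (topSet K x B j) hTxB hTxc hj2
  have h4 : fmax K y (B \ topSet K x B j) ≤ fmax K x (B \ topSet K x B j) + ε :=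
    fmax_lip K hxy (sdiff_topSet_nonempty K hj2)
  unfold gapX
  linarith

lemma hxy_symm {x y : Fin K → ℝ} {ε : ℝ} (hxy : ∀ i, |x i - y i| ≤ ε) :
    ∀ i, |y i - x i| ≤ ε := fun i => (abs_sub_comm (y i) (x i)) ▸ hxy i

lemma descend_suffix (c : List (Finset (Fin K)) → ℝ) (x : Fin K → ℝ)
    (l : List (Finset (Fin K))) : l <:+ descend K m c x l := by
  unfold descend
  split
  · exact List.suffix_cons _ _
  · exact List.suffix_rfl

lemma descend_length (c : List (Finset (Fin K)) → ℝ) (x : Fin K → ℝ)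
    (l : List (Finset (Fin K))) : (descend K m c x l).length ≤ l.length + 1 := by
  unfold descend
  split
  · simp
  · simp

lemma run_suffix (c : List (Finset (Fin K)) → ℝ) (ε : ℝ) (x : Fin K → ℝ) :
    ∀ (n : ℕ) (l : List (Finset (Fin K))), l <:+ run K m c ε x n l := by
  intro n
  induction n with
  | zero => intro l; exact List.suffix_rfl
  | succ n ih =>
    intro l
    rw [run]
    split_ifs
    · exact List.suffix_rfl
    · exact List.suffix_rfl
    · exact (descend_suffix K m c x l).trans (ih _)

lemma run_length (c : List (Finset (Fin K)) → ℝ) (ε : ℝ) (x : Fin K → ℝ) :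
    ∀ (n : ℕ) (l : List (Finset (Fin K))),
      (run K m c ε x n l).length ≤ l.length + n := by
  intro n
  induction n with
  | zero => intro l; rw [run]; omega
  | succ n ih =>
    intro l
    rw [run]
    split_ifs
    · omega
    · omega
    · calc (run K m c ε x n (descend K m c x l)).length
          ≤ (descend K m c x l).length + n := ih _
        _ ≤ l.length + (n + 1) := by
            have := descend_length K m c x l; omega

lemma run_stall {c : List (Finset (Fin K)) → ℝ} {ε : ℝ} {x : Fin K → ℝ}
    {l : List (Finset (Fin K))} (hB : ¬ Bnode K m l = ∅)
    (hs : ¬ stopAt K m c ε x l) (hd : descend K m c x l = l) :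
    ∀ n, run K m c ε x n l = l := by
  intro n
  induction n with
  | zero => rfl
  | succ n ih =>
    rw [run, if_neg hB, if_neg hs, hd, ih]

lemma valid_suffix : ∀ {l q : List (Finset (Fin K))},
    q <:+ l → Valid K m l → Valid K m q := by
  intro l
  induction l with
  | nil =>
    intro q h _
    rw [List.suffix_nil.mp h]
    trivial
  | cons T l ih =>
    intro q h hv
    rcases List.suffix_cons_iff.mp h with rfl | h'
    · exact hv
    · exact ih h' hv.1

lemma nostop {ε : ℝ} (hε : 0 < ε) (hK : 1 ≤ K)
    {c : List (Finset (Fin K)) → ℝ} {x y : Fin K → ℝ}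
    (hc : ∀ l, Valid K m l → c l ∈ Set.Icc (0 : ℝ) (1 / K))
    (hxy : ∀ i, |x i - y i| ≤ ε)
    {P l : List (Finset (Fin K))} (hlP : l <:+ P) (hval : Valid K m l)
    (hPlen : P.length + 1 ≤ K)
    (hfar : ∀ Q, Q <:+ P → ∀ T : Finset (Fin K), T.Nonempty → T ⊂ Bnode K m Q →
      ¬ |gapX K x T (Bnode K m Q) - c Q * rangeX K x (Bnode K m Q)| ≤ 10 * (K : ℝ) * ε) :
    ¬ stopAt K m c ε y l := by
  rintro ⟨q, hq, j, hj1, hj2, habs⟩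
  rw [List.mem_tails] at hq
  have hqP : q <:+ P := hq.trans hlP
  have hqval : Valid K m q := valid_suffix K m hq hval
  have hBne : (Bnode K m q).Nonempty := Finset.card_pos.mp (by omega)
  have hcq := hc q hqval
  have hg1 : gapX K x (topSet K x (Bnode K m q) j) (Bnode K m q) - 2 * ε
      ≤ gapX K y (topSet K y (Bnode K m q) j) (Bnode K m q) := gap_lip K hxy hj1 hj2
  have hg2 : gapX K y (topSet K y (Bnode K m q) j) (Bnode K m q) - 2 * ε
      ≤ gapX K x (topSet K x (Bnode K m q) j) (Bnode K m q) :=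
    gap_lip K (hxy_symm K hxy) hj1 hj2
  have hr1 : fmax K y (Bnode K m q) ≤ fmax K x (Bnode K m q) + ε := fmax_lip K hxy hBne
  have hr2 : fmax K x (Bnode K m q) ≤ fmax K y (Bnode K m q) + ε :=
    fmax_lip K (hxy_symm K hxy) hBne
  have hr3 : fmin K x (Bnode K m q) - ε ≤ fmin K y (Bnode K m q) := fmin_lip K hxy hBne
  have hr4 : fmin K y (Bnode K m q) - ε ≤ fmin K x (Bnode K m q) :=
    fmin_lip K (hxy_symm K hxy) hBne
  have hrange : |rangeX K y (Bnode K m q) - rangeX K x (Bnode K m q)| ≤ 2 * ε := by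
    rw [abs_le]
    unfold rangeX
    constructor <;> linarith
  have hKpos : (0 : ℝ) < K := by exact_mod_cast hK
  have hKinv : (1 : ℝ) / K ≤ 1 := by
    rw [div_le_one hKpos]
    exact_mod_cast hK
  have hcr : |c q * rangeX K y (Bnode K m q) - c q * rangeX K x (Bnode K m q)| ≤ 2 * ε := by
    rw [← mul_sub, abs_mul, abs_of_nonneg hcq.1]
    calc c q * |rangeX K y (Bnode K m q) - rangeX K x (Bnode K m q)|
        ≤ (1 / K) * (2 * ε) :=
          mul_le_mul hcq.2 hrange (abs_nonneg _) (by positivity)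
      _ ≤ 1 * (2 * ε) := mul_le_mul_of_nonneg_right hKinv (by positivity)
      _ = 2 * ε := one_mul _
  have hfarq := hfar q hqP (topSet K x (Bnode K m q) j)
    (topSet_nonempty K hj1 hj2.le) (topSet_ssubset K hj2)
  push_neg at hfarq
  have hdle : ((l.length - q.length + 1 : ℕ) : ℝ) ≤ (K : ℝ) := by
    have h1 : l.length ≤ P.length := hlP.length_le
    have h2 : l.length - q.length + 1 ≤ K := by omega
    exact_mod_cast h2
  have h6 : ((l.length - q.length + 1 : ℕ) : ℝ) * (6 * ε) ≤ (K : ℝ) * (6 * ε) :=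
    mul_le_mul_of_nonneg_right hdle (by positivity)
  have hKe : (1 : ℝ) * ε ≤ (K : ℝ) * ε :=
    mul_le_mul_of_nonneg_right (by exact_mod_cast hK) hε.le
  have habs2 := abs_le.mp habs
  have hcr2 := abs_le.mp hcr
  have hcontra : |gapX K x (topSet K x (Bnode K m q) j) (Bnode K m q)
      - c q * rangeX K x (Bnode K m q)| ≤ 10 * (K : ℝ) * ε := by
    rw [abs_le]
    constructor <;> nlinarith [hε.le]
  linarith [hcontra, hfarq]

lemma descend_eq {ε : ℝ} (hε : 0 < ε) (hK : 1 ≤ K)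
    {c : List (Finset (Fin K)) → ℝ} {x y : Fin K → ℝ}
    (hc : ∀ l, Valid K m l → c l ∈ Set.Icc (0 : ℝ) (1 / K))
    (hxy : ∀ i, |x i - y i| ≤ ε)
    {P l : List (Finset (Fin K))} (hlP : l <:+ P) (hval : Valid K m l)
    (hBne : ¬ Bnode K m l = ∅)
    (hfar : ∀ Q, Q <:+ P → ∀ T : Finset (Fin K), T.Nonempty → T ⊂ Bnode K m Q →
      ¬ |gapX K x T (Bnode K m Q) - c Q * rangeX K x (Bnode K m Q)| ≤ 10 * (K : ℝ) * ε) :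
    descend K m c y l = descend K m c x l := by
  have hBne' : (Bnode K m l).Nonempty := Finset.nonempty_iff_ne_empty.mpr hBne
  have hcl := hc l hval
  have hKe : (1 : ℝ) * ε ≤ (K : ℝ) * ε :=
    mul_le_mul_of_nonneg_right (by exact_mod_cast hK) hε.le
  have hKpos : (0 : ℝ) < K := by exact_mod_cast hK
  have hKinv : (1 : ℝ) / K ≤ 1 := by
    rw [div_le_one hKpos]
    exact_mod_cast hK
  have hest : ∀ j, 1 ≤ j → j < (Bnode K m l).card →
      |(gapX K y (topSet K y (Bnode K m l) j) (Bnode K m l)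
          - c l * rangeX K y (Bnode K m l))
        - (gapX K x (topSet K x (Bnode K m l) j) (Bnode K m l)
          - c l * rangeX K x (Bnode K m l))| ≤ 4 * ε := by
    intro j hj1 hj2
    have hg1 := gap_lip K hxy hj1 hj2
    have hg2 := gap_lip K (hxy_symm K hxy) hj1 hj2
    have hr1 : fmax K y (Bnode K m l) ≤ fmax K x (Bnode K m l) + ε := fmax_lip K hxy hBne'
    have hr2 : fmax K x (Bnode K m l) ≤ fmax K y (Bnode K m l) + ε :=
      fmax_lip K (hxy_symm K hxy) hBne'
    have hr3 : fmin K x (Bnode K m l) - ε ≤ fmin K y (Bnode K m l) := fmin_lip K hxy hBne'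
    have hr4 : fmin K y (Bnode K m l) - ε ≤ fmin K x (Bnode K m l) :=
      fmin_lip K (hxy_symm K hxy) hBne'
    have hrange : |rangeX K y (Bnode K m l) - rangeX K x (Bnode K m l)| ≤ 2 * ε := by
      rw [abs_le]; unfold rangeX; constructor <;> linarith
    have hcr : |c l * rangeX K y (Bnode K m l) - c l * rangeX K x (Bnode K m l)| ≤ 2 * ε := by
      rw [← mul_sub, abs_mul, abs_of_nonneg hcl.1]
      calc c l * |rangeX K y (Bnode K m l) - rangeX K x (Bnode K m l)|
          ≤ (1 / K) * (2 * ε) := mul_le_mul hcl.2 hrange (abs_nonneg _) (by positivity)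
        _ ≤ 1 * (2 * ε) := mul_le_mul_of_nonneg_right hKinv (by positivity)
        _ = 2 * ε := one_mul _
    have hcr2 := abs_le.mp hcr
    rw [abs_le]
    constructor <;> linarith
  have hiff : ∀ j,
      (1 ≤ j ∧ j < (Bnode K m l).card ∧
        c l * rangeX K x (Bnode K m l)
          ≤ gapX K x (topSet K x (Bnode K m l) j) (Bnode K m l))
      ↔ (1 ≤ j ∧ j < (Bnode K m l).card ∧
        c l * rangeX K y (Bnode K m l)
          ≤ gapX K y (topSet K y (Bnode K m l) j) (Bnode K m l)) := by
    intro j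
    constructor
    · rintro ⟨hj1, hj2, hge⟩
      refine ⟨hj1, hj2, ?_⟩
      have hfarj := hfar l hlP (topSet K x (Bnode K m l) j)
        (topSet_nonempty K hj1 hj2.le) (topSet_ssubset K hj2)
      push_neg at hfarj
      have h4 := abs_le.mp (hest j hj1 hj2)
      have habs' : 10 * (K : ℝ) * ε
          < gapX K x (topSet K x (Bnode K m l) j) (Bnode K m l)
            - c l * rangeX K x (Bnode K m l) := by
        rcases abs_cases (gapX K x (topSet K x (Bnode K m l) j) (Bnode K m l)
            - c l * rangeX K x (Bnode K m l)) with ⟨he, hsgn⟩ | ⟨he, hsgn⟩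
        · linarith [hfarj]
        · nlinarith [hfarj, hε.le]
      nlinarith [hε.le]
    · rintro ⟨hj1, hj2, hge⟩
      refine ⟨hj1, hj2, ?_⟩
      have hfarj := hfar l hlP (topSet K x (Bnode K m l) j)
        (topSet_nonempty K hj1 hj2.le) (topSet_ssubset K hj2)
      push_neg at hfarj
      have h4 := abs_le.mp (hest j hj1 hj2)
      by_contra hcon
      push_neg at hcon
      have habs' : gapX K x (topSet K x (Bnode K m l) j) (Bnode K m l)
            - c l * rangeX K x (Bnode K m l) < -(10 * (K : ℝ) * ε) := by
        rcases abs_cases (gapX K x (topSet K x (Bnode K m l) j) (Bnode K m l)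
            - c l * rangeX K x (Bnode K m l)) with ⟨he, hsgn⟩ | ⟨he, hsgn⟩
        · nlinarith [hfarj, hε.le]
        · linarith [hfarj]
      nlinarith [hε.le]
  by_cases hx' : ∃ j, 1 ≤ j ∧ j < (Bnode K m l).card ∧
      c l * rangeX K x (Bnode K m l)
        ≤ gapX K x (topSet K x (Bnode K m l) j) (Bnode K m l)
  · have hy' : ∃ j, 1 ≤ j ∧ j < (Bnode K m l).card ∧
        c l * rangeX K y (Bnode K m l)
          ≤ gapX K y (topSet K y (Bnode K m l) j) (Bnode K m l) := by
      obtain ⟨j, hj⟩ := hx'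
      exact ⟨j, (hiff j).mp hj⟩
    rw [descend, descend, dif_pos hx', dif_pos hy']
    have hfind : Nat.find hy' = Nat.find hx' := by
      apply le_antisymm
      · exact Nat.find_le ((hiff _).mp (Nat.find_spec hx'))
      · exact Nat.find_le ((hiff _).mpr (Nat.find_spec hy'))
    rw [hfind]
    obtain ⟨hj1, hj2, hge⟩ := Nat.find_spec hx'
    congr 1
    have hfarj := hfar l hlP (topSet K x (Bnode K m l) (Nat.find hx'))
      (topSet_nonempty K hj1 hj2.le) (topSet_ssubset K hj2)
    push_neg at hfarj
    have hRx0 : 0 ≤ c l * rangeX K x (Bnode K m l) :=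
      mul_nonneg hcl.1 (rangeX_nonneg K hBne')
    have hGx : 10 * (K : ℝ) * ε
        < gapX K x (topSet K x (Bnode K m l) (Nat.find hx')) (Bnode K m l) := by
      rcases abs_cases (gapX K x (topSet K x (Bnode K m l) (Nat.find hx')) (Bnode K m l)
          - c l * rangeX K x (Bnode K m l)) with ⟨he, hsgn⟩ | ⟨he, hsgn⟩
      · linarith [hfarj]
      · linarith [hfarj]
    apply topSet_eq_of_sep K (topSet_subset K x (Bnode K m l) (Nat.find hx'))
      (topSet_card K hj2.le) hj2.le
    intro a ha b hb
    have h1 : fmin K x (topSet K x (Bnode K m l) (Nat.find hx')) ≤ x a := fmin_le K ha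
    have h2 : x b ≤ fmax K x (Bnode K m l \ topSet K x (Bnode K m l) (Nat.find hx')) :=
      le_fmax K hb
    have hxa := abs_sub_le_iff.mp (hxy a)
    have hxb := abs_sub_le_iff.mp (hxy b)
    have hgap : gapX K x (topSet K x (Bnode K m l) (Nat.find hx')) (Bnode K m l)
        = fmin K x (topSet K x (Bnode K m l) (Nat.find hx'))
          - fmax K x (Bnode K m l \ topSet K x (Bnode K m l) (Nat.find hx')) := rfl
    nlinarith [hε.le]
  · have hy' : ¬ ∃ j, 1 ≤ j ∧ j < (Bnode K m l).card ∧
        c l * rangeX K y (Bnode K m l)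
          ≤ gapX K y (topSet K y (Bnode K m l) j) (Bnode K m l) := by
      rintro ⟨j, hj⟩
      exact hx' ⟨j, (hiff j).mpr hj⟩
    rw [descend, descend, dif_neg hx', dif_neg hy']

lemma key {ε : ℝ} (hε : 0 < ε) (hK : 1 ≤ K)
    {c : List (Finset (Fin K)) → ℝ} {x y : Fin K → ℝ}
    (hc : ∀ l, Valid K m l → c l ∈ Set.Icc (0 : ℝ) (1 / K))
    (hxy : ∀ i, |x i - y i| ≤ ε)
    {T₀ : Finset (Fin K)} {P : List (Finset (Fin K))} (hPlen : P.length + 1 ≤ K)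
    (hfar : ∀ Q, Q <:+ P → ∀ T : Finset (Fin K), T.Nonempty → T ⊂ Bnode K m Q →
      ¬ |gapX K x T (Bnode K m Q) - c Q * rangeX K x (Bnode K m Q)| ≤ 10 * (K : ℝ) * ε) :
    ∀ (n : ℕ) (l : List (Finset (Fin K))), l <:+ P → Valid K m l →
      (T₀ :: P) <:+ run K m c ε x n l → (T₀ :: P) <:+ run K m c ε y n l := by
  intro n
  induction n with
  | zero =>
    intro l hlP _ h
    exfalso
    rw [run] at h
    have h1 := h.length_le
    have h2 := hlP.length_le
    simp only [List.length_cons] at h1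
    omega
  | succ n ih =>
    intro l hlP hval hrun
    have hlen : l.length ≤ P.length := hlP.length_le
    rw [run] at hrun ⊢
    by_cases hB : Bnode K m l = ∅
    · rw [if_pos hB] at hrun
      exfalso
      have hle := hrun.length_le
      simp only [List.length_cons] at hle
      omega
    rw [if_neg hB] at hrun ⊢
    by_cases hsx : stopAt K m c ε x l
    · rw [if_pos hsx] at hrun
      exfalso
      have hle := hrun.length_le
      simp only [List.length_cons] at hle
      omega
    rw [if_neg hsx] at hrun
    have hnsy : ¬ stopAt K m c ε y l := nostop K m hε hK hc hxy hlP hval hPlen hfar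
    rw [if_neg hnsy]
    by_cases hdx : ∃ j, 1 ≤ j ∧ j < (Bnode K m l).card ∧
        c l * rangeX K x (Bnode K m l)
          ≤ gapX K x (topSet K x (Bnode K m l) j) (Bnode K m l)
    swap
    · exfalso
      have hdl : descend K m c x l = l := by rw [descend, dif_neg hdx]
      rw [hdl, run_stall K m hB hsx hdl n] at hrun
      have hle := hrun.length_le
      simp only [List.length_cons] at hle
      omega
    · obtain ⟨hj1, hj2, hge⟩ := Nat.find_spec hdx
      have hdxe : descend K m c x l = topSet K x (Bnode K m l) (Nat.find hdx) :: l := by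
        rw [descend, dif_pos hdx]
      have hvalid' : Valid K m (descend K m c x l) := by
        rw [hdxe]
        exact ⟨hval, topSet_nonempty K hj1 hj2.le, topSet_ssubset K hj2⟩
      have hdeq : descend K m c y l = descend K m c x l :=
        descend_eq K m hε hK hc hxy hlP hval hB hfar
      rw [hdeq]
      by_cases hlPe : l = P
      · subst hlPe
        rw [hdxe] at hrun ⊢
        have h1 : (topSet K x (Bnode K m l) (Nat.find hdx) :: l)
            <:+ run K m c ε x n (topSet K x (Bnode K m l) (Nat.find hdx) :: l) :=
          run_suffix K m c ε x n _
        have heq : topSet K x (Bnode K m l) (Nat.find hdx) :: l = T₀ :: l := by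
          have hs : (topSet K x (Bnode K m l) (Nat.find hdx) :: l) <:+ (T₀ :: l) :=
            List.suffix_of_suffix_length_le h1 hrun (by simp)
          exact List.IsSuffix.eq_of_length hs (by simp)
        rw [heq]
        exact run_suffix K m c ε y n _
      · have hlt : l.length < P.length :=
          lt_of_le_of_ne hlen (fun h => hlPe (List.IsSuffix.eq_of_length hlP h))
        have h0 := run_suffix K m c ε x n (descend K m c x l)
        rw [hdxe] at hrun hvalid' h0 ⊢
        have hsfx : (topSet K x (Bnode K m l) (Nat.find hdx) :: l) <:+ (T₀ :: P) :=
          List.suffix_of_suffix_length_le h0 hrun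
            (by simp only [List.length_cons]; omega)
        have hsubP : (topSet K x (Bnode K m l) (Nat.find hdx) :: l) <:+ P := by
          rcases List.suffix_cons_iff.mp hsfx with he | h
          · exfalso
            have hlen2 : l.length = P.length := by
              have hcl := congrArg List.length he
              simp only [List.length_cons] at hcl
              omega
            omega
          · exact h
        exact ih _ hsubP hvalid' hrun

end Aux

/-- Lemma 2.5, item 2: suppose the assignment P ← P̂ (with P̂ = T₀ :: P) occurs during
the run on x, and for every ancestor Q ⪯ P and every child Q_j of Q in T_{K,m} the
inequality |gap_{Q_j}(x) - c(Q)·range_Q(x)| ≤ 10Kε fails. Then for every y with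
‖x - y‖_∞ ≤ ε the assignment P ← P̂ also occurs when the algorithm is run on y. -/
theorem stmt8 (K m : ℕ) (hm : 1 ≤ m) (hK : m ≤ K) (ε : ℝ) (hε : 0 < ε)
    (c : List (Finset (Fin K)) → ℝ)
    (hc : ∀ l, Valid K m l → c l ∈ Set.Icc (0 : ℝ) (1 / K))
    (x : Fin K → ℝ) (hx : ∀ i, x i ∈ Set.Icc (0 : ℝ) 1)
    (T₀ : Finset (Fin K)) (P : List (Finset (Fin K)))
    (hvisit : (T₀ :: P) <:+ Pmap K m c ε x)
    (hfar : ∀ Q, Q <:+ P → ∀ T : Finset (Fin K), T.Nonempty → T ⊂ Bnode K m Q →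
      ¬ |gapX K x T (Bnode K m Q) - c Q * rangeX K x (Bnode K m Q)| ≤ 10 * (K : ℝ) * ε)
    (y : Fin K → ℝ) (hy : ∀ i, y i ∈ Set.Icc (0 : ℝ) 1)
    (hxy : ∀ i, |x i - y i| ≤ ε) :
    (T₀ :: P) <:+ Pmap K m c ε y := by
  have hK1 : 1 ≤ K := le_trans hm hK
  have hPlen : P.length + 1 ≤ K := by
    have h1 := hvisit.length_le
    have h2 := run_length K m c ε x K []
    unfold Pmap at h1
    simp only [List.length_cons, List.length_nil] at h1 h2
    omega
  exact key K m hε hK1 hc hxy hPlen hfar K [] List.nil_suffix trivial hvisit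


end MPB
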